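/- arXiv:1210.7961 — 2 statements merged into one kernel-verified Lean document; each statement's English description precedes it below -/
import Mathlib

section
/- If L_1 and L_2 are non-proportional nonzero linear forms and 2k < d, then the subspaces V_1 = { L_1^{d-k} F : F ∈ R_k } and V_2 = { L_2^{d-k} F : F ∈ R_k } of R_d intersect trivially: V_1 ∩ V_2 = {0}. -/
open MvPolynomial

section Helpers

variable {F : Type*} [Field F]

private lemma degree_one_eq_single {σ : Type*} {m : σ →₀ ℕ} (h : m.degree = 1) :
    ∃ i, m = Finsupp.single i 1 := by
  classical
  have hm : m ≠ 0 := by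
    intro h0
    rw [h0, map_zero] at h
    exact one_ne_zero h.symm
  obtain ⟨i, hi⟩ := Finsupp.support_nonempty_iff.mpr hm
  have hi1 : 1 ≤ m i := Nat.one_le_iff_ne_zero.mpr (Finsupp.mem_support_iff.mp hi)
  have hile : m i ≤ m.degree := Finsupp.le_degree i m
  have hmi : m i = 1 := le_antisymm (h ▸ hile) hi1
  refine ⟨i, Finsupp.eq_single_iff.mpr ⟨?_, hmi⟩⟩
  intro j hj
  simp only [Finset.mem_singleton]
  by_contra hji
  have hj1 : 1 ≤ m j := Nat.one_le_iff_ne_zero.mpr (Finsupp.mem_support_iff.mp hj)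
  have hsub : ({i, j} : Finset σ) ⊆ m.support := by
    intro x hx
    rcases Finset.mem_insert.mp hx with rfl | hx
    · exact hi
    · exact (Finset.mem_singleton.mp hx) ▸ hj
  have h2 : m i + m j ≤ m.degree := by
    have := Finset.sum_le_sum_of_subset hsub (f := m)
    rwa [Finset.sum_pair (fun hc => hji hc.symm)] at this
  omega

private lemma homogeneousComponent_self {σ : Type*} {φ : MvPolynomial σ F} {n : ℕ}
    (h : φ.IsHomogeneous n) : homogeneousComponent n φ = φ := by
  ext d
  rw [coeff_homogeneousComponent]
  split_ifs with hd
  · rfl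
  · exact (h.coeff_eq_zero hd).symm

private lemma homogeneousComponent_ne {σ : Type*} {φ : MvPolynomial σ F} {i n : ℕ}
    (h : φ.IsHomogeneous i) (hne : i ≠ n) : homogeneousComponent n φ = 0 := by
  ext d
  rw [coeff_homogeneousComponent]
  split_ifs with hd
  · rw [h.coeff_eq_zero (hd ▸ hne ∘ Eq.symm)]
    simp
  · simp

private lemma homogeneousComponent_totalDegree_ne_zero {σ : Type*} {g : MvPolynomial σ F}
    (hg : g ≠ 0) : homogeneousComponent g.totalDegree g ≠ 0 := by
  classical
  have hsupp : g.support.Nonempty := support_nonempty.mpr hg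
  obtain ⟨d, hd, hdeg⟩ := Finset.exists_mem_eq_sup g.support hsupp (fun s => s.sum fun _ e => e)
  have hdd : d.degree = g.totalDegree := by
    rw [totalDegree, hdeg]
    rfl
  intro h0
  have := coeff_homogeneousComponent (σ := σ) (R := F) g.totalDegree g d
  rw [h0, if_pos hdd] at this
  exact (MvPolynomial.mem_support_iff.mp hd) (by simpa using this.symm)

private lemma homog_mul_degree {σ : Type*} {p g : MvPolynomial σ F} {e m : ℕ}
    (hp : p.IsHomogeneous e) (hpg : (p * g).IsHomogeneous m) (hp0 : p ≠ 0) (hg0 : g ≠ 0) :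
    m = e + g.totalDegree := by
  classical
  set t := g.totalDegree with ht
  have key : homogeneousComponent (e + t) (p * g) = p * homogeneousComponent t g := by
    conv_lhs => rw [← sum_homogeneousComponent g, Finset.mul_sum, map_sum]
    rw [Finset.sum_eq_single t]
    · exact homogeneousComponent_self (hp.mul (homogeneousComponent_isHomogeneous t g))
    · intro i _ hit
      exact homogeneousComponent_ne (hp.mul (homogeneousComponent_isHomogeneous i g))
        (by omega)
    · intro h
      exact absurd (Finset.self_mem_range_succ t) h
  have hne : p * homogeneousComponent t g ≠ 0 :=
    mul_ne_zero hp0 (homogeneousComponent_totalDegree_ne_zero hg0)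
  by_contra hmne
  rw [homogeneousComponent_ne hpg hmne] at key
  exact hne key.symm

private lemma prime_X_fin {N : ℕ} (j : Fin (N + 1)) :
    Prime (X j : MvPolynomial (Fin (N + 1)) F) := by
  let e : MvPolynomial (Fin (N + 1)) F ≃ₐ[F] Polynomial (MvPolynomial (Fin N) F) :=
    (renameEquiv F (finSuccEquiv' j)).trans (optionEquivLeft F (Fin N))
  have he : e (X j) = Polynomial.X := by
    simp [e, renameEquiv_apply, finSuccEquiv'_at, optionEquivLeft_X_none]
  have := (MulEquiv.prime_iff (p := (X j : MvPolynomial (Fin (N + 1)) F)) e.toMulEquiv).symm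
  rw [this]
  show Prime (e (X j))
  rw [he]
  exact Polynomial.prime_X

private lemma linear_decomposition {N : ℕ} {L : MvPolynomial (Fin (N + 1)) F}
    (hL : L.IsHomogeneous 1) :
    L = ∑ i : Fin (N + 1), C (coeff (Finsupp.single i 1) L) * X i := by
  classical
  ext m
  rw [coeff_sum]
  simp only [coeff_C_mul, coeff_X']
  by_cases hm : m.degree = 1
  · obtain ⟨i₀, rfl⟩ := degree_one_eq_single hm
    rw [Finset.sum_eq_single i₀]
    · simp
    · intro i _ hi
      rw [if_neg, mul_zero]
      intro hc
      exact hi (by simpa [Finsupp.single_eq_single_iff] using hc)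
    · simp
  · rw [hL.coeff_eq_zero hm, Finset.sum_eq_zero]
    intro i _
    rw [if_neg, mul_zero]
    intro hc
    apply hm
    rw [← hc]
    simp [Finsupp.degree_single]

private lemma prime_linear {N : ℕ} {L : MvPolynomial (Fin (N + 1)) F}
    (hL : L.IsHomogeneous 1) (hL0 : L ≠ 0) : Prime L := by
  classical
  set c : Fin (N + 1) → F := fun i => coeff (Finsupp.single i 1) L with hc
  have hdec : L = ∑ i : Fin (N + 1), C (c i) * X i := linear_decomposition hL
  have hex : ∃ j, c j ≠ 0 := by
    by_contra h
    push_neg at h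
    apply hL0
    rw [hdec, Finset.sum_eq_zero]
    intro i _
    rw [h i]
    simp
  obtain ⟨j, hcj⟩ := hex
  set E : MvPolynomial (Fin (N + 1)) F := ∑ i ∈ Finset.univ.erase j, C (c i) * X i with hE
  have hLE : L = C (c j) * X j + E := by
    rw [hdec, hE, ← Finset.add_sum_erase _ _ (Finset.mem_univ j)]
  set g : Fin (N + 1) → MvPolynomial (Fin (N + 1)) F :=
    fun i => if i = j then C (c j)⁻¹ * (X j - E) else X i with hg
  set g' : Fin (N + 1) → MvPolynomial (Fin (N + 1)) F :=
    fun i => if i = j then L else X i with hg'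
  have haevE : ∀ (h : Fin (N + 1) → MvPolynomial (Fin (N + 1)) F),
      (∀ i, i ≠ j → h i = X i) → aeval h E = E := by
    intro h hh
    rw [hE, map_sum, Finset.sum_congr rfl]
    intro i hi
    have hij : i ≠ j := Finset.ne_of_mem_erase hi
    simp [hh i hij]
  have hCCinv : (C (c j)⁻¹ : MvPolynomial (Fin (N + 1)) F) * C (c j) = 1 := by
    rw [← C_mul, inv_mul_cancel₀ hcj, C_1]
  have halg : ∀ a : F, (algebraMap F (MvPolynomial (Fin (N + 1)) F)) a = C a := fun _ => rfl
  have hgj : g j = C (c j)⁻¹ * (X j - E) := by simp [hg]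
  have hgj' : g' j = L := by simp [hg']
  have haevL : aeval g L = X j := by
    conv_lhs => rw [hLE]
    rw [map_add, map_mul, aeval_C, aeval_X, haevE g (fun i hij => by simp [hg, hij]),
      halg, hgj, ← mul_assoc, mul_comm (C (c j)) (C (c j)⁻¹), hCCinv, one_mul]
    ring
  have hcomp1 : (aeval g).comp (aeval g') = AlgHom.id F (MvPolynomial (Fin (N + 1)) F) := by
    apply MvPolynomial.algHom_ext
    intro i
    simp only [AlgHom.coe_comp, Function.comp_apply, aeval_X, AlgHom.id_apply]
    by_cases hij : i = j
    · subst hij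
      rw [hgj', haevL]
    · have h1 : g' i = X i := by simp [hg', hij]
      rw [h1, aeval_X]
      simp [hg, hij]
  have hcomp2 : (aeval g').comp (aeval g) = AlgHom.id F (MvPolynomial (Fin (N + 1)) F) := by
    apply MvPolynomial.algHom_ext
    intro i
    simp only [AlgHom.coe_comp, Function.comp_apply, aeval_X, AlgHom.id_apply]
    by_cases hij : i = j
    · subst hij
      rw [hgj, map_mul, aeval_C, map_sub, aeval_X, hgj',
        haevE g' (fun i hij => by simp [hg', hij]), halg]
      conv_lhs => rw [hLE]
      rw [add_sub_cancel_right, ← mul_assoc, hCCinv, one_mul]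
    · have h1 : g i = X i := by simp [hg, hij]
      rw [h1, aeval_X]
      simp [hg', hij]
  let eqv : MvPolynomial (Fin (N + 1)) F ≃ₐ[F] MvPolynomial (Fin (N + 1)) F :=
    AlgEquiv.ofAlgHom (aeval g) (aeval g') hcomp1 hcomp2
  have hprime_image : Prime (eqv L) := by
    show Prime (aeval g L)
    rw [haevL]
    exact prime_X_fin j
  have := (MulEquiv.prime_iff (p := L) eqv.toMulEquiv).symm
  rw [this]
  exact hprime_image

private lemma eq_C_of_totalDegree_eq_zero {σ : Type*} {u : MvPolynomial σ F}
    (h : u.totalDegree = 0) : u = C (coeff 0 u) := by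
  classical
  ext m
  by_cases hm : m = 0
  · subst hm; simp
  · rw [coeff_C, if_neg (fun hc => hm hc.symm)]
    by_contra hc
    have hmem : m ∈ u.support := Finsupp.mem_support_iff.mpr hc
    have := (totalDegree_eq_zero_iff σ u).mp h m hmem
    exact hm (Finsupp.ext this)

end Helpers

theorem osculating_intersection_trivial (F : Type*) [Field F] (n d k : ℕ) (hn : 1 ≤ n)
    (hk : 1 ≤ k) (hkd : k < d) (h2k : 2 * k < d)
    (L₁ L₂ : MvPolynomial (Fin (n+1)) F)
    (hL₁ : L₁ ∈ MvPolynomial.homogeneousSubmodule (Fin (n+1)) F 1)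
    (hL₂ : L₂ ∈ MvPolynomial.homogeneousSubmodule (Fin (n+1)) F 1)
    (hL₁0 : L₁ ≠ 0) (hL₂0 : L₂ ≠ 0)
    (hprop : ¬ ∃ c : F, L₁ = c • L₂) :
    ((MvPolynomial.homogeneousSubmodule (Fin (n+1)) F k).map
        (LinearMap.mulLeft F (L₁ ^ (d - k)))) ⊓
      ((MvPolynomial.homogeneousSubmodule (Fin (n+1)) F k).map
        (LinearMap.mulLeft F (L₂ ^ (d - k)))) = ⊥ := by
  classical
  rw [mem_homogeneousSubmodule] at hL₁ hL₂
  set e := d - k with he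
  have hke : k < e := by omega
  rw [eq_bot_iff]
  rintro x hx
  rw [Submodule.mem_inf] at hx
  obtain ⟨h1, h2⟩ := hx
  rw [Submodule.mem_map] at h1 h2
  obtain ⟨F₁, hF₁, hx1⟩ := h1
  obtain ⟨F₂, hF₂, hx2⟩ := h2
  rw [mem_homogeneousSubmodule] at hF₁ hF₂
  rw [LinearMap.mulLeft_apply] at hx1 hx2
  have hprimeL₁ : Prime L₁ := prime_linear hL₁ hL₁0
  have hndvd : ¬ L₁ ∣ L₂ := by
    rintro ⟨u, hu⟩
    have hu0 : u ≠ 0 := by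
      rintro rfl
      rw [mul_zero] at hu
      exact hL₂0 hu
    have hdeg : (1 : ℕ) = 1 + u.totalDegree :=
      homog_mul_degree hL₁ (hu ▸ hL₂) hL₁0 hu0
    have htd : u.totalDegree = 0 := by omega
    have huC : u = C (coeff 0 u) := eq_C_of_totalDegree_eq_zero htd
    set a := coeff 0 u with ha
    have ha0 : a ≠ 0 := by
      intro h
      apply hL₂0
      rw [hu, huC, h]
      simp
    apply hprop
    refine ⟨a⁻¹, ?_⟩
    rw [hu, huC, smul_eq_C_mul]
    rw [← mul_assoc, mul_comm (C a⁻¹) L₁, mul_assoc, ← C_mul, inv_mul_cancel₀ ha0, C_1, mul_one]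
  have hdvd : L₁ ^ e ∣ F₂ := by
    have h1 : L₁ ^ e ∣ L₂ ^ e * F₂ := by
      rw [hx2, ← hx1]
      exact dvd_mul_right _ _
    have h2 : ¬ L₁ ∣ L₂ ^ e := fun h => hndvd (hprimeL₁.dvd_of_dvd_pow h)
    exact hprimeL₁.pow_dvd_of_dvd_mul_left e h2 h1
  have hF₂0 : F₂ = 0 := by
    by_contra hF₂ne
    obtain ⟨g, hgeq⟩ := hdvd
    have hg0 : g ≠ 0 := by
      rintro rfl
      rw [mul_zero] at hgeq
      exact hF₂ne hgeq
    have hL₁e : (L₁ ^ e).IsHomogeneous e := by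
      have := hL₁.pow e
      rwa [one_mul] at this
    have hL₁e0 : L₁ ^ e ≠ 0 := pow_ne_zero e hL₁0
    have : k = e + g.totalDegree := homog_mul_degree hL₁e (hgeq ▸ hF₂) hL₁e0 hg0
    omega
  rw [Submodule.mem_bot, ← hx2, hF₂0, mul_zero]
end

section
/- For non-proportional nonzero linear forms L_1, L_2 and 1 ≤ k < d with 2k ≤ d, the subspaces V_1 = L_1^{d-k} R_k and V_2 = L_2^{d-k} R_k of R_d satisfy dist(V_1, V_2) = 2·binomial(k+n,n). -/
open MvPolynomial

section Aux

variable {F : Type*} [Field F] {σ : Type*}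

lemma aux_eq_C_of_totalDegree_eq_zero (p : MvPolynomial σ F) (h : p.totalDegree = 0) :
    p = C (coeff 0 p) := by
  classical
  rw [totalDegree_eq_zero_iff] at h
  ext d
  obtain rfl | hd := eq_or_ne d 0
  · simp
  · rw [coeff_C, if_neg fun e => hd e.symm]
    by_contra hc
    exact hd (Finsupp.ext fun x => h d (by simpa [mem_support_iff] using hc) x)

lemma aux_exists_degree_eq_totalDegree (p : MvPolynomial σ F) (hp : p ≠ 0) :
    ∃ b ∈ p.support, b.degree = p.totalDegree := by
  obtain ⟨b, hb1, hb2⟩ := p.support.exists_mem_eq_sup (MvPolynomial.support_nonempty.mpr hp)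
      fun m : σ →₀ ℕ => m.degree
  refine ⟨b, hb1, hb2.symm.trans ?_⟩
  simp only [totalDegree, Finsupp.degree_apply, Finsupp.sum]

lemma aux_top_component_ne_zero (p : MvPolynomial σ F) (hp : p ≠ 0) :
    homogeneousComponent p.totalDegree p ≠ 0 := by
  obtain ⟨b, hb1, hb2⟩ := aux_exists_degree_eq_totalDegree p hp
  intro h0
  have := coeff_homogeneousComponent (σ := σ) (R := F) p.totalDegree p b
  rw [h0, if_pos hb2] at this
  exact (mem_support_iff.mp hb1) this.symm

lemma aux_component_top_mul (p q : MvPolynomial σ F) :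
    homogeneousComponent (p.totalDegree + q.totalDegree) (p * q) =
      homogeneousComponent p.totalDegree p * homogeneousComponent q.totalDegree q := by
  set A := p.totalDegree
  set B := q.totalDegree
  conv_lhs => rw [← sum_homogeneousComponent p, ← sum_homogeneousComponent q]
  rw [Finset.sum_mul_sum, map_sum]
  rw [Finset.sum_eq_single A]
  · rw [map_sum, Finset.sum_eq_single B]
    · have hmem : homogeneousComponent A p * homogeneousComponent B q ∈
          homogeneousSubmodule σ F (A + B) :=
        (homogeneousComponent_isHomogeneous A p).mul (homogeneousComponent_isHomogeneous B q)
      rw [homogeneousComponent_of_mem hmem, if_pos rfl]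
    · intro j hj hjB
      have hmem : homogeneousComponent A p * homogeneousComponent j q ∈
          homogeneousSubmodule σ F (A + j) :=
        (homogeneousComponent_isHomogeneous A p).mul (homogeneousComponent_isHomogeneous j q)
      rw [homogeneousComponent_of_mem hmem, if_neg]
      intro hEq
      exact hjB (by omega)
    · intro h
      exact absurd (Finset.self_mem_range_succ B) h
  · intro i hi hiA
    have hi' : i ≤ A := Nat.lt_succ_iff.mp (Finset.mem_range.mp hi)
    rw [map_sum]
    apply Finset.sum_eq_zero
    intro j hj
    have hj' : j ≤ B := Nat.lt_succ_iff.mp (Finset.mem_range.mp hj)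
    have hmem : homogeneousComponent i p * homogeneousComponent j q ∈
        homogeneousSubmodule σ F (i + j) :=
      (homogeneousComponent_isHomogeneous i p).mul (homogeneousComponent_isHomogeneous j q)
    rw [homogeneousComponent_of_mem hmem, if_neg]
    intro hEq
    exact hiA (by omega)
  · intro h
    exact absurd (Finset.self_mem_range_succ A) h

lemma aux_totalDegree_mul_eq {p q : MvPolynomial σ F} (hp : p ≠ 0) (hq : q ≠ 0) :
    (p * q).totalDegree = p.totalDegree + q.totalDegree := by
  refine le_antisymm (totalDegree_mul p q) ?_
  by_contra h
  push_neg at h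
  have h0 : homogeneousComponent (p.totalDegree + q.totalDegree) (p * q) = 0 :=
    homogeneousComponent_eq_zero _ _ h
  rw [aux_component_top_mul] at h0
  exact mul_ne_zero (aux_top_component_ne_zero p hp) (aux_top_component_ne_zero q hq) h0

lemma aux_irreducible_linear (L : MvPolynomial σ F) (hL : L.IsHomogeneous 1) (hL0 : L ≠ 0) :
    Irreducible L := by
  have hdeg : L.totalDegree = 1 := hL.totalDegree hL0
  constructor
  · intro hu
    obtain ⟨u, rfl⟩ := hu
    obtain ⟨v, hv⟩ : ∃ v, (u : MvPolynomial σ F) * v = 1 := ⟨(u⁻¹ : _), u.mul_inv⟩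
    have hv0 : v ≠ 0 := by rintro rfl; simp at hv
    have := aux_totalDegree_mul_eq hL0 hv0
    rw [hv, totalDegree_one] at this
    omega
  · intro a b hab
    have ha0 : a ≠ 0 := by rintro rfl; simp at hab; exact hL0 hab
    have hb0 : b ≠ 0 := by rintro rfl; simp at hab; exact hL0 hab
    have hsum : a.totalDegree + b.totalDegree = 1 := by
      rw [← aux_totalDegree_mul_eq ha0 hb0, ← hab, hdeg]
    rcases Nat.eq_zero_or_pos a.totalDegree with h | h
    · left
      rw [aux_eq_C_of_totalDegree_eq_zero a h]
      have : coeff 0 a ≠ 0 := by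
        intro hc
        apply ha0
        rw [aux_eq_C_of_totalDegree_eq_zero a h, hc, map_zero]
      exact (isUnit_iff_ne_zero.mpr this).map (C : F →+* MvPolynomial σ F)
    · right
      have hb : b.totalDegree = 0 := by omega
      rw [aux_eq_C_of_totalDegree_eq_zero b hb]
      have : coeff 0 b ≠ 0 := by
        intro hc
        apply hb0
        rw [aux_eq_C_of_totalDegree_eq_zero b hb, hc, map_zero]
      exact (isUnit_iff_ne_zero.mpr this).map (C : F →+* MvPolynomial σ F)

end Aux

section Dim

variable (F : Type*) [Field F]

/-- The set of exponent multisets of degree `k` is in bijection with `Sym (Fin (n+1)) k`. -/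
noncomputable def degreeSetEquivSym (n k : ℕ) :
    {d : Fin (n+1) →₀ ℕ // d.degree = k} ≃ Sym (Fin (n+1)) k where
  toFun d := ⟨Finsupp.toMultiset d.1, by
    rw [Finsupp.card_toMultiset]
    simpa [Finsupp.degree_apply, Finsupp.sum] using d.2⟩
  invFun m := ⟨Multiset.toFinsupp (m : Multiset (Fin (n+1))), by
    have : Multiset.card (Finsupp.toMultiset (Multiset.toFinsupp (m : Multiset (Fin (n+1))))) = k := by
      rw [Multiset.toFinsupp_toMultiset]; exact m.2
    rw [Finsupp.card_toMultiset] at this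
    simpa [Finsupp.degree_apply, Finsupp.sum] using this⟩
  left_inv d := by
    ext1
    simp
  right_inv m := by
    ext1
    simp

noncomputable instance degreeSetFintype (n k : ℕ) :
    Fintype {d : Fin (n+1) →₀ ℕ // d.degree = k} :=
  Fintype.ofEquiv _ (degreeSetEquivSym n k).symm

lemma card_degreeSet (n k : ℕ) :
    Fintype.card {d : Fin (n+1) →₀ ℕ // d.degree = k} = (k + n).choose n := by
  rw [Fintype.card_congr (degreeSetEquivSym n k), Sym.card_sym_eq_choose, Fintype.card_fin]
  have h1 : n + 1 + k - 1 = k + n := by omega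
  rw [h1]
  rw [← Nat.choose_symm (le_add_self : n ≤ k + n)]
  congr 1
  omega

/-- The canonical basis of the space of homogeneous polynomials of degree `k`. -/
noncomputable def homogBasis (n k : ℕ) :
    Module.Basis {d : Fin (n+1) →₀ ℕ // d.degree = k} F
      (homogeneousSubmodule (Fin (n+1)) F k) := by
  have h : homogeneousSubmodule (Fin (n+1)) F k =
      MvPolynomial.restrictSupport F {d : Fin (n+1) →₀ ℕ | d.degree = k} :=
    homogeneousSubmodule_eq_finsupp_supported (Fin (n+1)) F k
  exact (MvPolynomial.basisRestrictSupport F {d : Fin (n+1) →₀ ℕ | d.degree = k}).map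
    (LinearEquiv.ofEq _ _ h.symm)

instance homogFiniteDimensional (n k : ℕ) :
    FiniteDimensional F (homogeneousSubmodule (Fin (n+1)) F k) :=
  Module.Finite.of_basis (homogBasis F n k)

lemma finrank_homog (n k : ℕ) :
    Module.finrank F (homogeneousSubmodule (Fin (n+1)) F k) = (k + n).choose n := by
  rw [Module.finrank_eq_card_basis (homogBasis F n k), card_degreeSet]

end Dim

theorem osculating_dist_small_k (F : Type*) [Field F] (n d k : ℕ) (hn : 1 ≤ n)
    (hk : 1 ≤ k) (hkd : k < d) (h2k : 2 * k < d)
    (L₁ L₂ : MvPolynomial (Fin (n+1)) F)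
    (hL₁ : L₁ ∈ MvPolynomial.homogeneousSubmodule (Fin (n+1)) F 1)
    (hL₂ : L₂ ∈ MvPolynomial.homogeneousSubmodule (Fin (n+1)) F 1)
    (hL₁0 : L₁ ≠ 0) (hL₂0 : L₂ ≠ 0)
    (hprop : ¬ ∃ c : F, L₁ = c • L₂)
    (V₁ V₂ : Submodule F (MvPolynomial (Fin (n+1)) F))
    (hV₁ : V₁ = (MvPolynomial.homogeneousSubmodule (Fin (n+1)) F k).map
        (LinearMap.mulLeft F (L₁ ^ (d - k))))
    (hV₂ : V₂ = (MvPolynomial.homogeneousSubmodule (Fin (n+1)) F k).map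
        (LinearMap.mulLeft F (L₂ ^ (d - k)))) :
    Module.finrank F (V₁ ⊔ V₂ : Submodule F (MvPolynomial (Fin (n+1)) F)) -
      Module.finrank F (V₁ ⊓ V₂ : Submodule F (MvPolynomial (Fin (n+1)) F)) =
    2 * (k + n).choose n := by
  set m := d - k with hm
  have hkm : k < m := by omega
  -- multiplication by a nonzero element is injective
  have hinj : ∀ (L : MvPolynomial (Fin (n+1)) F), L ≠ 0 →
      Function.Injective (LinearMap.mulLeft F (L ^ m)) := by
    intro L hL0 a b hab
    simp only [LinearMap.mulLeft_apply] at hab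
    exact mul_left_cancel₀ (pow_ne_zero m hL0) hab
  -- finrank of V₁ and V₂
  have hrank : ∀ (L : MvPolynomial (Fin (n+1)) F), L ≠ 0 →
      Module.finrank F ((MvPolynomial.homogeneousSubmodule (Fin (n+1)) F k).map
        (LinearMap.mulLeft F (L ^ m))) = (k + n).choose n := by
    intro L hL0
    rw [← LinearEquiv.finrank_eq
      (Submodule.equivMapOfInjective _ (hinj L hL0)
        (MvPolynomial.homogeneousSubmodule (Fin (n+1)) F k))]
    exact finrank_homog F n k
  have hfd : ∀ (L : MvPolynomial (Fin (n+1)) F), L ≠ 0 →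
      FiniteDimensional F ((MvPolynomial.homogeneousSubmodule (Fin (n+1)) F k).map
        (LinearMap.mulLeft F (L ^ m))) := by
    intro L hL0
    exact Module.Finite.equiv
      (Submodule.equivMapOfInjective _ (hinj L hL0)
        (MvPolynomial.homogeneousSubmodule (Fin (n+1)) F k))
  haveI : FiniteDimensional F V₁ := hV₁ ▸ hfd L₁ hL₁0
  haveI : FiniteDimensional F V₂ := hV₂ ▸ hfd L₂ hL₂0
  -- intersection is trivial
  have hprime : Prime L₂ :=
    (UniqueFactorizationMonoid.irreducible_iff_prime).mp
      (aux_irreducible_linear L₂ hL₂ hL₂0)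
  have hnotdvd : ¬ L₂ ∣ L₁ := by
    rintro ⟨h, hh⟩
    have hh0 : h ≠ 0 := by rintro rfl; rw [mul_zero] at hh; exact hL₁0 hh
    have : L₁.totalDegree = L₂.totalDegree + h.totalDegree := by
      rw [hh]; exact aux_totalDegree_mul_eq hL₂0 hh0
    rw [hL₁.totalDegree hL₁0, hL₂.totalDegree hL₂0] at this
    have hdeg0 : h.totalDegree = 0 := by omega
    apply hprop
    obtain ⟨c, hc⟩ : ∃ c, h = C c := ⟨_, aux_eq_C_of_totalDegree_eq_zero h hdeg0⟩
    exact ⟨c, by rw [hh, hc, MvPolynomial.smul_eq_C_mul, mul_comm]⟩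
  have hinf : V₁ ⊓ V₂ = ⊥ := by
    rw [eq_bot_iff]
    rintro x ⟨hx1, hx2⟩
    rw [hV₁] at hx1
    rw [hV₂] at hx2
    obtain ⟨f₁, hf₁, hxf₁⟩ := hx1
    obtain ⟨f₂, hf₂, hxf₂⟩ := hx2
    simp only [LinearMap.mulLeft_apply] at hxf₁ hxf₂
    rcases eq_or_ne f₁ 0 with rfl | hf₁0
    · simp only [Submodule.mem_bot]
      rw [← hxf₁, mul_zero]
    have hdvd : L₂ ^ m ∣ f₁ := by
      have h1 : L₂ ^ m ∣ L₁ ^ m * f₁ := by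
        rw [hxf₁, ← hxf₂]
        exact Dvd.intro _ rfl
      refine hprime.pow_dvd_of_dvd_mul_left m ?_ h1
      intro hcon
      exact hnotdvd (hprime.dvd_of_dvd_pow hcon)
    exfalso
    obtain ⟨h, hh⟩ := hdvd
    have hLm0 : L₂ ^ m ≠ 0 := pow_ne_zero m hL₂0
    have hh0 : h ≠ 0 := by rintro rfl; rw [mul_zero] at hh; exact hf₁0 hh
    have hdegf : f₁.totalDegree = k := hf₁.totalDegree hf₁0
    have hdegL : (L₂ ^ m).totalDegree = m := by
      have : (L₂ ^ m).IsHomogeneous (1 * m) := hL₂.pow m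
      rw [one_mul] at this
      exact this.totalDegree hLm0
    have : f₁.totalDegree = (L₂ ^ m).totalDegree + h.totalDegree := by
      rw [hh]; exact aux_totalDegree_mul_eq hLm0 hh0
    omega
  -- put it together
  have hsum := Submodule.finrank_sup_add_finrank_inf_eq V₁ V₂
  rw [hinf] at hsum
  rw [hinf]
  have h1 : Module.finrank F V₁ = (k + n).choose n := by rw [hV₁]; exact hrank L₁ hL₁0
  have h2 : Module.finrank F V₂ = (k + n).choose n := by rw [hV₂]; exact hrank L₂ hL₂0
  rw [h1, h2] at hsum
  simp only [finrank_bot] at hsum ⊢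
  omega
end
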